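/- Let k be a field, G a finite group whose order is not divisible by the characteristic of k, α a 2-cocycle on G with values in kˣ, and R an α-representation of G on a k-vector space V. If U is a subspace of V with R(g)(U) ⊆ U for all g ∈ G, then there exists a subspace W of V with R(g)(W) ⊆ W for all g ∈ G and V = U ⊕ W (i.e., U and W are complementary). In other words, every invariant subspace of an α-representation of G has an invariant complement. -/

import Mathlib

/-- Let `G` be a finite group whose order is not divisible by the characteristic of the
field `k`, `α` a 2-cocycle on `G` with values in `kˣ`, and `R` an `α`-representation of `G`
on a `k`-vector space `V`.  Then every `R`-invariant subspace `U` of `V` has an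
`R`-invariant complement `W` (so `V = U ⊕ W`). -/
theorem twisted_rep_invariant_complement
    {k : Type*} [Field k] {G : Type*} [Group G] [Fintype G]
    {V : Type*} [AddCommGroup V] [Module k V]
    (hchar : ¬ (ringChar k ∣ Fintype.card G))
    (α : G → G → kˣ)
    (hα : ∀ g h l : G, α g h * α (g * h) l = α g (h * l) * α h l)
    (R : G → V ≃ₗ[k] V)
    (hR : ∀ g h : G,
      (R g).toLinearMap ∘ₗ (R h).toLinearMap = ((α g h : k)) • (R (g * h)).toLinearMap)
    (U : Submodule k V)
    (hU : ∀ g : G, ∀ u ∈ U, R g u ∈ U) :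
    ∃ W : Submodule k V, (∀ g : G, ∀ w ∈ W, R g w ∈ W) ∧ IsCompl U W := by
  classical
  have hcard : (Fintype.card G : k) ≠ 0 := by
    intro h
    exact hchar ((CharP.cast_eq_zero_iff k (ringChar k) _).mp h)
  have hRapp : ∀ g h (v : V), R g (R h v) = (α g h : k) • R (g * h) v := by
    intro g h v
    have := congrFun (congrArg DFunLike.coe (hR g h)) v
    simpa using this
  have hinv : ∀ g (v : V), R g ((R g).symm v) = v := fun g v => (R g).apply_symm_apply v
  have h1 : ∀ v : V, R (1 : G) v = (α 1 1 : k) • v := by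
    intro v
    have h := hRapp 1 1 v
    rw [one_mul] at h
    calc R (1 : G) v = (R 1).symm (R 1 (R 1 v)) := by simp
      _ = (R 1).symm ((α 1 1 : k) • R 1 v) := by rw [h]
      _ = (α 1 1 : k) • v := by simp
  have hsymm_smul : ∀ g h (w : V),
      R h ((R (g * h)).symm w) = (α g h : k) • (R g).symm w := by
    intro g h w
    apply (R g).injective
    rw [hRapp g h, hinv, map_smul, hinv]
  have hsymmU : ∀ g : G, ∀ u ∈ U, (R g).symm u ∈ U := by
    intro g u hu
    have key : (R g).symm u = ((α g g⁻¹ : k) * (α 1 1 : k))⁻¹ • R g⁻¹ u := by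
      apply (R g).injective
      rw [hinv, map_smul, hRapp g g⁻¹, mul_inv_cancel, h1, smul_smul, smul_smul, mul_assoc,
        inv_mul_cancel₀ (mul_ne_zero (α g g⁻¹).ne_zero (α 1 1).ne_zero), one_smul]
    rw [key]
    exact U.smul_mem _ (hU g⁻¹ u hu)
  obtain ⟨W₀, hW₀⟩ := Submodule.exists_isCompl U
  set π : V →ₗ[k] V := U.subtype ∘ₗ (U.projectionOnto W₀ hW₀) with hπ
  have hπU : ∀ u ∈ U, π u = u := by
    intro u hu
    have := Submodule.linearProjOfIsCompl_apply_left hW₀ ⟨u, hu⟩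
    simp only [hπ, LinearMap.comp_apply]
    erw [this]
    rfl
  have hπmem : ∀ v : V, π v ∈ U := fun v => (U.linearProjOfIsCompl W₀ hW₀ v).2
  set p : V →ₗ[k] V :=
    (Fintype.card G : k)⁻¹ • ∑ g : G, (R g).symm.toLinearMap ∘ₗ π ∘ₗ (R g).toLinearMap
    with hp
  have hpapp : ∀ v : V,
      p v = (Fintype.card G : k)⁻¹ • ∑ g : G, (R g).symm (π (R g v)) := by
    intro v
    simp [hp, LinearMap.sum_apply]
  have hpU : ∀ v : V, p v ∈ U := by
    intro v
    rw [hpapp]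
    exact U.smul_mem _ (Submodule.sum_mem _ fun g _ => hsymmU g _ (hπmem _))
  have hpfix : ∀ u ∈ U, p u = u := by
    intro u hu
    rw [hpapp]
    have : ∀ g : G, (R g).symm (π (R g u)) = u := by
      intro g
      rw [hπU _ (hU g u hu), (R g).symm_apply_apply]
    rw [Finset.sum_congr rfl (fun g _ => this g)]
    simp only [Finset.sum_const, Finset.card_univ]
    rw [← Nat.cast_smul_eq_nsmul k, smul_smul, inv_mul_cancel₀ hcard, one_smul]
  have hpcomm : ∀ (h : G) (v : V), p (R h v) = R h (p v) := by
    intro h v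
    rw [hpapp, hpapp, map_smul, map_sum]
    congr 1
    apply Fintype.sum_equiv (Equiv.mulRight h)
    intro g
    simp only [Equiv.coe_mulRight]
    rw [hRapp g h v, map_smul π, map_smul (R g).symm, hsymm_smul]
  refine ⟨LinearMap.ker p, ?_, ?_, ?_⟩
  · intro g w hw
    rw [LinearMap.mem_ker] at hw ⊢
    rw [hpcomm, hw, map_zero]
  · rw [Submodule.disjoint_def]
    intro x hxU hxK
    rw [LinearMap.mem_ker] at hxK
    rw [← hpfix x hxU, hxK]
  · rw [codisjoint_iff, eq_top_iff]
    intro v _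
    refine Submodule.mem_sup.mpr ⟨p v, hpU v, v - p v, ?_, by abel⟩
    rw [LinearMap.mem_ker, map_sub, hpfix (p v) (hpU v), sub_self]
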